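/- Longest Processing Time (LPT) is value-monotone: for any m ≥ 2 and input sequences x, y of length n of positive reals with x_i ≥ y_i for all i, the vector of bin sums of LPT(x, m) dominates the vector of bin sums of LPT(y, m); in particular both the maximum and minimum bin sums weakly increase. -/

import Mathlib

open scoped Classical

/-- The bin chosen by List Scheduling: the smallest-index bin with minimal current sum. -/
noncomputable def lsIndex {m : ℕ} (hm : 0 < m) (v : Fin m → ℝ) : Fin m :=
  (Finset.univ.filter fun i => ∀ j, v i ≤ v j).min' (by
    obtain ⟨i, -, hi⟩ := Finset.exists_min_image Finset.univ v ⟨⟨0, hm⟩, Finset.mem_univ _⟩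
    exact ⟨i, Finset.mem_filter.mpr ⟨Finset.mem_univ _, fun j => hi j (Finset.mem_univ _)⟩⟩)

/-- One step of List Scheduling: place `x` into the chosen bin. -/
noncomputable def lsStep {m : ℕ} (hm : 0 < m) (v : Fin m → ℝ) (x : ℝ) : Fin m → ℝ :=
  Function.update v (lsIndex hm v) (v (lsIndex hm v) + x)

/-- The vector of bin sums after List Scheduling processes the list `xs` into `m` bins. -/
noncomputable def lsSums {m : ℕ} (hm : 0 < m) (xs : List ℝ) : Fin m → ℝ :=
  xs.foldl (lsStep hm) (fun _ => 0)

/-- `s` dominates `t` iff some permutation `π` satisfies `s (π i) ≥ t i` for all `i`. -/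
def Dominates {m : ℕ} (s t : Fin m → ℝ) : Prop :=
  ∃ π : Equiv.Perm (Fin m), ∀ i, t i ≤ s (π i)


/-- Sort a list of reals in nonincreasing order. -/
noncomputable def sortDesc (xs : List ℝ) : List ℝ :=
  xs.mergeSort (fun a b => decide (b ≤ a))

/-- The bin sums produced by the Longest Processing Time (LPT) algorithm:
sort the inputs in nonincreasing order, then run List Scheduling. -/
noncomputable def lptSums {m : ℕ} (hm : 0 < m) (xs : List ℝ) : Fin m → ℝ :=
  lsSums hm (sortDesc xs)

/-! ### Auxiliary lemmas -/

lemma lsIndex_min {m : ℕ} (hm : 0 < m) (v : Fin m → ℝ) (k : Fin m) :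
    v (lsIndex hm v) ≤ v k := by
  have h := Finset.min'_mem (Finset.univ.filter fun i => ∀ j, v i ≤ v j) (by
    obtain ⟨i, -, hi⟩ := Finset.exists_min_image Finset.univ v ⟨⟨0, hm⟩, Finset.mem_univ _⟩
    exact ⟨i, Finset.mem_filter.mpr ⟨Finset.mem_univ _, fun j => hi j (Finset.mem_univ _)⟩⟩)
  exact (Finset.mem_filter.mp h).2 k

/-- The key exchange step for updates at minimizing indices. -/
lemma dominates_update {m : ℕ} {v w : Fin m → ℝ} {a b : ℝ} (hab : b ≤ a)
    (i j : Fin m) (hvi : ∀ k, v i ≤ v k) (hwj : ∀ k, w j ≤ w k)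
    (h : Dominates v w) :
    Dominates (Function.update v i (v i + a)) (Function.update w j (w j + b)) := by
  obtain ⟨π, hπ⟩ := h
  by_cases hji : π j = i
  · refine ⟨π, fun k => ?_⟩
    by_cases hk : k = j
    · subst hk
      rw [hji, Function.update_self, Function.update_self]
      have := hπ k
      rw [hji] at this
      linarith
    · have hne : π k ≠ i := fun hc => hk (π.injective (hc.trans hji.symm))
      rw [Function.update_of_ne hk, Function.update_of_ne hne]
      exact hπ k
  · have hπj₀ : π (π.symm i) = i := π.apply_symm_apply i
    have hjj₀ : π.symm i ≠ j := fun hc => hji (by rw [← hc, hπj₀])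
    refine ⟨π * Equiv.swap j (π.symm i), fun k => ?_⟩
    by_cases hk : k = j
    · subst hk
      have h1 : (π * Equiv.swap k (π.symm i)) k = i := by
        simp [Equiv.Perm.mul_apply, Equiv.swap_apply_left, hπj₀]
      rw [h1, Function.update_self, Function.update_self]
      have h2 : w k ≤ w (π.symm i) := hwj _
      have h3 : w (π.symm i) ≤ v i := by have := hπ (π.symm i); rwa [hπj₀] at this
      linarith
    · by_cases hk0 : k = π.symm i
      · rw [hk0]
        have h1 : (π * Equiv.swap j (π.symm i)) (π.symm i) = π j := by
          simp [Equiv.Perm.mul_apply, Equiv.swap_apply_right]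
        rw [h1, Function.update_of_ne hjj₀, Function.update_of_ne hji]
        have h2 : w (π.symm i) ≤ v i := by have := hπ (π.symm i); rwa [hπj₀] at this
        exact le_trans h2 (hvi _)
      · have h1 : (π * Equiv.swap j (π.symm i)) k = π k := by
          simp [Equiv.Perm.mul_apply, Equiv.swap_apply_of_ne_of_ne hk hk0]
        rw [h1]
        have hne : π k ≠ i := fun hc => hk0 (by rw [← hc, Equiv.symm_apply_apply])
        rw [Function.update_of_ne hk, Function.update_of_ne hne]
        exact hπ k

lemma dominates_lsStep {m : ℕ} (hm : 0 < m) {v w : Fin m → ℝ} {a b : ℝ}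
    (hab : b ≤ a) (h : Dominates v w) :
    Dominates (lsStep hm v a) (lsStep hm w b) :=
  dominates_update hab _ _ (lsIndex_min hm v) (lsIndex_min hm w) h

lemma dominates_foldl {m : ℕ} (hm : 0 < m) :
    ∀ {xs ys : List ℝ}, List.Forall₂ (· ≤ ·) ys xs → ∀ {v w : Fin m → ℝ},
      Dominates v w → Dominates (xs.foldl (lsStep hm) v) (ys.foldl (lsStep hm) w) := by
  intro xs ys h
  induction h with
  | nil => intro v w hvw; exact hvw
  | cons hab _ ih =>
      intro v w hvw
      exact ih (dominates_lsStep hm hab hvw)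

/-- Two sorted (nonincreasing) lists whose multisets are related pointwise by `≤`
are pointwise related. -/
lemma sorted_rel_forall₂ :
    ∀ (t s : List ℝ), t.Pairwise (· ≥ ·) → s.Pairwise (· ≥ ·) →
      Multiset.Rel (· ≤ ·) (↑t : Multiset ℝ) (↑s : Multiset ℝ) → List.Forall₂ (· ≤ ·) t s := by
  intro t
  induction t with
  | nil =>
      intro s _ _ hr
      have : (↑s : Multiset ℝ) = 0 := Multiset.rel_zero_left.mp hr
      have hs : s = [] := by simpa using this
      subst hs; exact List.Forall₂.nil
  | cons b t' ih =>
      intro s hts hss hr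
      have hr' : Multiset.Rel (· ≤ ·) (b ::ₘ ↑t') ↑s := by simpa using hr
      obtain ⟨c, s₀, hbc, hrel, hs_eq⟩ := Multiset.rel_cons_left.mp hr'
      cases s with
      | nil => simp at hs_eq
      | cons a s' =>
          have hss' := List.pairwise_cons.mp hss
          have hts' := List.pairwise_cons.mp hts
          have hs_eq' : a ::ₘ (↑s' : Multiset ℝ) = c ::ₘ s₀ := by simpa using hs_eq
          -- b ≤ a : c is a member of a :: s', and a is the max.
          have hc_mem : c ∈ a ::ₘ (↑s' : Multiset ℝ) := by
            rw [hs_eq']; exact Multiset.mem_cons_self _ _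
          have hca : c ≤ a := by
            rcases Multiset.mem_cons.mp hc_mem with h | h
            · exact h.le
            · exact hss'.1 c (by simpa using h)
          have hba : b ≤ a := le_trans hbc hca
          -- Rel t' s'
          have hrel' : Multiset.Rel (· ≤ ·) (↑t' : Multiset ℝ) (↑s' : Multiset ℝ) := by
            rcases Multiset.cons_eq_cons.mp hs_eq' with ⟨hac, hs0⟩ | ⟨hac, cs, hcs1, hcs2⟩
            · rw [hs0]; exact hrel
            · -- s' = c ::ₘ cs, s₀ = a ::ₘ cs
              rw [hcs2] at hrel
              obtain ⟨d, t₀, hda, hrel₀, ht'⟩ := Multiset.rel_cons_right.mp hrel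
              have hd_mem : d ∈ (↑t' : Multiset ℝ) := ht' ▸ Multiset.mem_cons_self _ _
              have hdb : d ≤ b := hts'.1 d (by simpa using hd_mem)
              have hdc : d ≤ c := le_trans hdb hbc
              rw [ht', hcs1]
              exact Multiset.Rel.cons hdc hrel₀
          exact List.Forall₂.cons hba (ih s' hts'.2 hss'.2 hrel')

lemma forall₂_rel {t s : List ℝ} (h : List.Forall₂ (· ≤ ·) t s) :
    Multiset.Rel (· ≤ ·) (↑t : Multiset ℝ) (↑s : Multiset ℝ) := by
  induction h with
  | nil => simp [Multiset.Rel.zero]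
  | cons hab _ ih => rw [← Multiset.cons_coe, ← Multiset.cons_coe]; exact Multiset.Rel.cons hab ih

lemma sortDesc_sorted (xs : List ℝ) : (sortDesc xs).Pairwise (· ≥ ·) := by
  have h := List.pairwise_mergeSort (le := fun a b : ℝ => decide (b ≤ a))
    (fun a b c hab hbc => by
      simp only [decide_eq_true_eq] at *
      exact le_trans hbc hab)
    (fun a b => by
      simp only [Bool.or_eq_true, decide_eq_true_eq]
      exact le_total b a) xs
  exact h.imp (fun {a b} hab => by simpa using hab)

lemma sortDesc_perm (xs : List ℝ) : (sortDesc xs).Perm xs :=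
  List.mergeSort_perm xs _

lemma dominates_lptSums {m n : ℕ} (hm : 0 < m) (x y : Fin n → ℝ)
    (hxy : ∀ i, y i ≤ x i) :
    Dominates (lptSums hm (List.ofFn x)) (lptSums hm (List.ofFn y)) := by
  have hfa : List.Forall₂ (· ≤ ·) (List.ofFn y) (List.ofFn x) := by
    rw [List.forall₂_iff_get]
    refine ⟨by simp, fun i h1 h2 => ?_⟩
    simp only [List.get_eq_getElem, List.getElem_ofFn]
    exact hxy _
  have hrel : Multiset.Rel (· ≤ ·) (↑(sortDesc (List.ofFn y)) : Multiset ℝ) (↑(sortDesc (List.ofFn x)) : Multiset ℝ) := by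
    have e1 : (↑(sortDesc (List.ofFn y)) : Multiset ℝ) = ↑(List.ofFn y) :=
      Quot.sound (sortDesc_perm _)
    have e2 : (↑(sortDesc (List.ofFn x)) : Multiset ℝ) = ↑(List.ofFn x) :=
      Quot.sound (sortDesc_perm _)
    rw [e1, e2]
    exact forall₂_rel hfa
  have hfa' : List.Forall₂ (· ≤ ·) (sortDesc (List.ofFn y)) (sortDesc (List.ofFn x)) :=
    sorted_rel_forall₂ _ _ (sortDesc_sorted _) (sortDesc_sorted _) hrel
  exact dominates_foldl hm hfa' ⟨Equiv.refl _, fun i => le_refl _⟩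

/-- LPT is value-monotone: if every input weakly increases, the output bin-sum vector
dominates the old one; in particular both the maximum and the minimum bin sums weakly
increase. -/
theorem lpt_value_monotone {m n : ℕ} (hm : 2 ≤ m) (x y : Fin n → ℝ)
    (hpos : ∀ i, 0 < y i) (hxy : ∀ i, y i ≤ x i)
    (hne : (Finset.univ : Finset (Fin m)).Nonempty := ⟨⟨0, by omega⟩, Finset.mem_univ _⟩) :
    Dominates (lptSums (by omega : 0 < m) (List.ofFn x))
        (lptSums (by omega : 0 < m) (List.ofFn y)) ∧
    Finset.univ.sup' hne (lptSums (by omega : 0 < m) (List.ofFn y)) ≤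
      Finset.univ.sup' hne (lptSums (by omega : 0 < m) (List.ofFn x)) ∧
    Finset.univ.inf' hne (lptSums (by omega : 0 < m) (List.ofFn y)) ≤
      Finset.univ.inf' hne (lptSums (by omega : 0 < m) (List.ofFn x)) := by
  have hdom := dominates_lptSums (by omega : 0 < m) x y hxy
  obtain ⟨π, hπ⟩ := hdom
  refine ⟨⟨π, hπ⟩, ?_, ?_⟩
  · obtain ⟨i, -, hi⟩ := Finset.exists_mem_eq_sup' hne (lptSums (by omega : 0 < m) (List.ofFn y))
    rw [hi]
    exact le_trans (hπ i) (Finset.le_sup' _ (Finset.mem_univ _))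
  · obtain ⟨j, -, hj⟩ := Finset.exists_mem_eq_inf' hne (lptSums (by omega : 0 < m) (List.ofFn x))
    rw [hj]
    calc Finset.univ.inf' hne (lptSums (by omega : 0 < m) (List.ofFn y))
        ≤ lptSums (by omega : 0 < m) (List.ofFn y) (π.symm j) :=
          Finset.inf'_le _ (Finset.mem_univ _)
      _ ≤ lptSums (by omega : 0 < m) (List.ofFn x) (π (π.symm j)) := hπ _
      _ = lptSums (by omega : 0 < m) (List.ofFn x) j := by rw [π.apply_symm_apply]
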